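/- Let B_l ≤ B_u be continuous on [a,b] and f⁻, f⁺ continuous on F = {(s,h) : s ∈ [a,b], B_l(s) ≤ h ≤ B_u(s)} with f⁻ ≤ f⁺ and |f^±| ≤ B. If a nonempty family {h_α} of continuous functions each satisfies B_l ≤ h_α ≤ B_u, D⁻h_α(s) ≥ f⁻(s,h_α(s)) and D⁺h_α(s) ≤ f⁺(s,h_α(s)) for all s ∈ [a,b), then the pointwise supremum h̄(s) = sup_α h_α(s) is continuous, satisfies B_l ≤ h̄ ≤ B_u, and satisfies D⁻h̄(s) ≥ f⁻(s,h̄(s)) and D⁺h̄(s) ≤ f⁺(s,h̄(s)) for all s ∈ [a,b). -/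

import Mathlib

open Filter Set Topology

noncomputable def DiniUpper (h : ℝ → ℝ) (s : ℝ) : EReal :=
  Filter.limsup (fun s' => (((h s' - h s) / (s' - s) : ℝ) : EReal)) (nhdsWithin s (Set.Ioi s))

noncomputable def DiniLower (h : ℝ → ℝ) (s : ℝ) : EReal :=
  Filter.liminf (fun s' => (((h s' - h s) / (s' - s) : ℝ) : EReal)) (nhdsWithin s (Set.Ioi s))

lemma ereal_le_coe_of_forall {L : EReal} {x : ℝ} (hyp : ∀ ε : ℝ, 0 < ε → L ≤ ((x + ε : ℝ) : EReal)) :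
    L ≤ (x : EReal) := by
  by_contra hc
  push_neg at hc
  rcases EReal.lt_iff_exists_real_btwn.1 hc with ⟨y, hy1, hy2⟩
  have hε : (0:ℝ) < y - x := by exact_mod_cast sub_pos.2 (EReal.coe_lt_coe_iff.1 hy1)
  have := hyp (y - x) hε
  rw [show x + (y - x) = y by ring] at this
  exact absurd (this.trans_lt hy2) (lt_irrefl _)

lemma ereal_coe_le_of_forall {L : EReal} {x : ℝ} (hyp : ∀ ε : ℝ, 0 < ε → ((x - ε : ℝ) : EReal) ≤ L) :
    (x : EReal) ≤ L := by
  by_contra hc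
  push_neg at hc
  rcases EReal.lt_iff_exists_real_btwn.1 hc with ⟨y, hy1, hy2⟩
  have hε : (0:ℝ) < x - y := by exact_mod_cast sub_pos.2 (EReal.coe_lt_coe_iff.1 hy2)
  have := hyp (x - y) hε
  rw [show x - (x - y) = y by ring] at this
  exact absurd (hy1.trans_le this) (lt_irrefl _)

lemma comp_upper_freq {g : ℝ → ℝ} {s t C : ℝ} (hst : s ≤ t) (hg : ContinuousOn g (Icc s t))
    (hd : ∀ u ∈ Ico s t, ∀ r, C < r → ∃ᶠ z in 𝓝[>] u, slope g u z < r) :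
    g t ≤ g s + C * (t - s) := by
  have := image_le_of_liminf_slope_right_le_deriv_boundary (f := g)
    (B := fun x => g s + C * (x - s)) (B' := fun _ => C) hg
    (by simp)
    (by fun_prop)
    (fun x _ => by simpa using ((((hasDerivWithinAt_id x (Ici x)).sub_const s).const_mul C).const_add (g s)))
    hd (right_mem_Icc.2 hst)
  simpa using this

lemma comp_upper {g : ℝ → ℝ} {s t C : ℝ} (hst : s ≤ t) (hg : ContinuousOn g (Icc s t))
    (hd : ∀ u ∈ Ico s t, DiniUpper g u ≤ (C : EReal)) :
    g t ≤ g s + C * (t - s) := by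
  refine comp_upper_freq hst hg fun u hu r hr => ?_
  have h1 : DiniUpper g u < (r : EReal) :=
    lt_of_le_of_lt (hd u hu) (by exact_mod_cast hr)
  have h2 := eventually_lt_of_limsup_lt h1
  refine (h2.mono fun z hz => ?_).frequently
  rw [slope_def_field]
  exact_mod_cast hz

lemma comp_lower {g : ℝ → ℝ} {s t c : ℝ} (hst : s ≤ t) (hg : ContinuousOn g (Icc s t))
    (hd : ∀ u ∈ Ico s t, (c : EReal) ≤ DiniLower g u) :
    g s + c * (t - s) ≤ g t := by
  have := comp_upper_freq (g := fun x => -g x) (C := -c) hst (hg.neg) ?_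
  · linarith
  intro u hu r hr
  have h1 : ((-r : ℝ) : EReal) < DiniLower g u :=
    lt_of_lt_of_le (by exact_mod_cast (by linarith : (-r : ℝ) < c)) (hd u hu)
  have h2 := eventually_lt_of_lt_liminf h1
  refine (h2.mono fun z hz => ?_).frequently
  rw [slope_def_field]
  have h3 : (-r : ℝ) < (g z - g u) / (z - u) := by exact_mod_cast hz
  have hne : -g z - -g u = -(g z - g u) := by ring
  rw [hne, neg_div]
  linarith

theorem stmt_10 {ι : Type*} [Nonempty ι] (a b B : ℝ) (hab : a < b) (hB : 0 < B)
    (Bl Bu : ℝ → ℝ) (fm fp : ℝ → ℝ → ℝ)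
    (hBl : ContinuousOn Bl (Set.Icc a b)) (hBu : ContinuousOn Bu (Set.Icc a b))
    (hBlu : ∀ s ∈ Set.Icc a b, Bl s ≤ Bu s)
    (F : Set (ℝ × ℝ))
    (hF : F = {p : ℝ × ℝ | p.1 ∈ Set.Icc a b ∧ Bl p.1 ≤ p.2 ∧ p.2 ≤ Bu p.1})
    (hfmc : ContinuousOn (fun p : ℝ × ℝ => fm p.1 p.2) F)
    (hfpc : ContinuousOn (fun p : ℝ × ℝ => fp p.1 p.2) F)
    (hle : ∀ p ∈ F, fm p.1 p.2 ≤ fp p.1 p.2)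
    (hbd : ∀ p ∈ F, |fm p.1 p.2| ≤ B ∧ |fp p.1 p.2| ≤ B)
    (h : ι → ℝ → ℝ)
    (hcont : ∀ α, ContinuousOn (h α) (Set.Icc a b))
    (hbounds : ∀ α, ∀ s ∈ Set.Icc a b, Bl s ≤ h α s ∧ h α s ≤ Bu s)
    (hdini : ∀ α, ∀ s ∈ Set.Ico a b,
      ((fm s (h α s) : ℝ) : EReal) ≤ DiniLower (h α) s ∧
      DiniUpper (h α) s ≤ ((fp s (h α s) : ℝ) : EReal)) :
    ContinuousOn (fun s => ⨆ α, h α s) (Set.Icc a b) ∧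
    (∀ s ∈ Set.Icc a b, Bl s ≤ (⨆ α, h α s) ∧ (⨆ α, h α s) ≤ Bu s) ∧
    (∀ s ∈ Set.Ico a b,
      ((fm s (⨆ α, h α s) : ℝ) : EReal) ≤ DiniLower (fun x => ⨆ α, h α x) s ∧
      DiniUpper (fun x => ⨆ α, h α x) s ≤ ((fp s (⨆ α, h α s) : ℝ) : EReal)) := by
  obtain ⟨α₀⟩ := (inferInstance : Nonempty ι)
  -- basic facts
  have hbdd : ∀ x ∈ Icc a b, BddAbove (range fun α => h α x) := by
    intro x hx
    exact ⟨Bu x, by rintro _ ⟨α, rfl⟩; exact (hbounds α x hx).2⟩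
  have hFmem : ∀ α, ∀ x ∈ Icc a b, (x, h α x) ∈ F := by
    intro α x hx
    rw [hF]
    exact ⟨hx, (hbounds α x hx).1, (hbounds α x hx).2⟩
  set Hb : ℝ → ℝ := fun x => ⨆ α, h α x with hHb
  have hle_sup : ∀ α, ∀ x ∈ Icc a b, h α x ≤ Hb x := fun α x hx => le_ciSup (hbdd x hx) α
  have hsup_le : ∀ x, ∀ c : ℝ, (∀ α, h α x ≤ c) → Hb x ≤ c := fun x c hc => ciSup_le hc
  -- Dini bounds by B for each member
  have hDu : ∀ α, ∀ u ∈ Ico a b, DiniUpper (h α) u ≤ (B : EReal) := by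
    intro α u hu
    refine (hdini α u hu).2.trans ?_
    exact_mod_cast (abs_le.1 (hbd _ (hFmem α u ⟨hu.1, hu.2.le⟩)).2).2
  have hDl : ∀ α, ∀ u ∈ Ico a b, ((-B : ℝ) : EReal) ≤ DiniLower (h α) u := by
    intro α u hu
    refine le_trans ?_ (hdini α u hu).1
    exact_mod_cast (abs_le.1 (hbd _ (hFmem α u ⟨hu.1, hu.2.le⟩)).1).1
  -- Lipschitz bound for each member
  have hlip : ∀ α, ∀ s ∈ Icc a b, ∀ t ∈ Icc a b, s ≤ t → |h α t - h α s| ≤ B * (t - s) := by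
    intro α s hs t ht hst
    have hsub : Icc s t ⊆ Icc a b := Icc_subset_Icc hs.1 ht.2
    have hup : h α t ≤ h α s + B * (t - s) :=
      comp_upper hst ((hcont α).mono hsub)
        (fun u hu => hDu α u ⟨hs.1.trans hu.1, hu.2.trans_le ht.2⟩)
    have hlo : h α s + (-B) * (t - s) ≤ h α t :=
      comp_lower hst ((hcont α).mono hsub)
        (fun u hu => hDl α u ⟨hs.1.trans hu.1, hu.2.trans_le ht.2⟩)
    rw [abs_le]
    constructor <;> linarith
  -- Lipschitz bound for the sup
  have hblip : ∀ s ∈ Icc a b, ∀ t ∈ Icc a b, s ≤ t → |Hb t - Hb s| ≤ B * (t - s) := by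
    intro s hs t ht hst
    rw [abs_le]
    constructor
    · have : Hb s ≤ Hb t + B * (t - s) := by
        apply hsup_le
        intro α
        have := (abs_le.1 (hlip α s hs t ht hst)).1
        have h2 := hle_sup α t ht
        linarith
      linarith
    · have : Hb t ≤ Hb s + B * (t - s) := by
        apply hsup_le
        intro α
        have := (abs_le.1 (hlip α s hs t ht hst)).2
        have h2 := hle_sup α s hs
        linarith
      linarith
  have habs : ∀ s ∈ Icc a b, ∀ t ∈ Icc a b, |Hb t - Hb s| ≤ B * |t - s| := by
    intro s hs t ht
    rcases le_total s t with hst | hst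
    · simpa [abs_of_nonneg (sub_nonneg.2 hst)] using hblip s hs t ht hst
    · rw [abs_sub_comm, abs_sub_comm t s]
      simpa [abs_of_nonneg (sub_nonneg.2 hst)] using hblip t ht s hs hst
  have hbcont : ContinuousOn Hb (Icc a b) := by
    apply LipschitzOnWith.continuousOn (K := Real.toNNReal B)
    apply LipschitzOnWith.of_dist_le_mul
    intro x hx y hy
    rw [Real.dist_eq, Real.dist_eq, Real.coe_toNNReal B hB.le]
    exact habs y hy x hx
  have hbmem : ∀ x ∈ Icc a b, Bl x ≤ Hb x ∧ Hb x ≤ Bu x := fun x hx =>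
    ⟨(hbounds α₀ x hx).1.trans (hle_sup α₀ x hx), hsup_le x _ fun α => (hbounds α x hx).2⟩
  -- continuity extraction
  have hcontp : ∀ s ∈ Icc a b, ∀ (f : ℝ × ℝ → ℝ), ContinuousOn f F → ∀ ε : ℝ, 0 < ε →
      ∃ δ : ℝ, 0 < δ ∧ ∀ q ∈ F, |q.1 - s| < δ → |q.2 - Hb s| < δ → |f q - f (s, Hb s)| < ε := by
    intro s hs f hf ε hε
    have hpF : (s, Hb s) ∈ F := by
      rw [hF]; exact ⟨hs, (hbmem s hs).1, (hbmem s hs).2⟩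
    have := hf _ hpF
    rw [Metric.continuousWithinAt_iff] at this
    obtain ⟨δ, hδ, hδ'⟩ := this ε hε
    refine ⟨δ, hδ, fun q hq h1 h2 => ?_⟩
    have hd : dist q (s, Hb s) < δ := by
      rw [Prod.dist_eq]
      apply max_lt <;> rwa [Real.dist_eq]
    have := hδ' hq hd
    rwa [Real.dist_eq] at this
  refine ⟨hbcont, hbmem, ?_⟩
  intro s hs
  have hsmem : s ∈ Icc a b := ⟨hs.1, hs.2.le⟩
  have hpF : (s, Hb s) ∈ F := by
    rw [hF]; exact ⟨hsmem, (hbmem s hsmem).1, (hbmem s hsmem).2⟩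
  constructor
  · -- lower Dini bound for the sup
    show ((fm s (Hb s) : ℝ) : EReal) ≤ DiniLower Hb s
    apply ereal_coe_le_of_forall
    intro ε hε
    obtain ⟨δ, hδ, hδ'⟩ := hcontp s hsmem _ hfmc (ε/2) (half_pos hε)
    set δ' := min (b - s) (δ / (B + ε/2 + 1)) with hδ'def
    have hδ'pos : 0 < δ' := lt_min (sub_pos.2 hs.2) (div_pos hδ (by linarith))
    have key : ∀ s' ∈ Ioc s (s + δ'), (fm s (Hb s) - ε : ℝ) ≤ (Hb s' - Hb s) / (s' - s) := by
      intro s' hs'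
      have hss' : s < s' := hs'.1
      have hd1 : s' - s ≤ δ' := by linarith [hs'.2]
      have hs'b : s' ≤ b := by
        have := min_le_left (b - s) (δ / (B + ε/2 + 1))
        have : δ' ≤ b - s := this
        linarith
      have hs'mem : s' ∈ Icc a b := ⟨hsmem.1.trans hss'.le, hs'b⟩
      have hδ'le : δ' ≤ δ / (B + ε/2 + 1) := min_le_right _ _
      have hδle : δ / (B + ε/2 + 1) ≤ δ := by
        apply div_le_self hδ.le; linarith
      -- choose a member close to the sup at s
      obtain ⟨α, hα⟩ := exists_lt_of_lt_ciSup
        (show Hb s - (ε/2) * (s' - s) < ⨆ α, h α s by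
          have : 0 < (ε/2) * (s' - s) := mul_pos (half_pos hε) (sub_pos.2 hss')
          simp only [hHb]; linarith)
      -- comparison on [s, s']
      have hcomp : h α s + (fm s (Hb s) - ε/2) * (s' - s) ≤ h α s' := by
        apply comp_lower hss'.le ((hcont α).mono (Icc_subset_Icc hsmem.1 hs'mem.2))
        intro u hu
        have humem : u ∈ Ico a b := ⟨hsmem.1.trans hu.1, hu.2.trans_le hs'mem.2⟩
        have humem' : u ∈ Icc a b := ⟨humem.1, humem.2.le⟩
        refine le_trans ?_ (hdini α u humem).1
        have hq : (u, h α u) ∈ F := hFmem α u humem'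
        have hus : u - s ≤ s' - s := by linarith [hu.2.le]
        have h1 : |u - s| < δ := by
          rw [abs_of_nonneg (sub_nonneg.2 hu.1)]
          calc u - s < s' - s := by linarith [hu.2]
            _ ≤ δ' := hd1
            _ ≤ δ := hδ'le.trans hδle
        have h2 : |h α u - Hb s| < δ := by
          have hle1 : h α u ≤ Hb u := hle_sup α u humem'
          have hle2 := (abs_le.1 (hblip s hsmem u humem' hu.1)).2
          have hle3 := (abs_le.1 (hlip α s hsmem u humem' hu.1)).1
          have hBu2 : B * (u - s) ≤ B * (s' - s) :=
            mul_le_mul_of_nonneg_left hus hB.le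
          have hkey : B * (s' - s) + (ε/2) * (s' - s) < δ := by
            have h5 : (B + ε/2) * (s' - s) ≤ (B + ε/2) * δ' :=
              mul_le_mul_of_nonneg_left hd1 (by linarith)
            have h6 : (B + ε/2) * δ' ≤ (B + ε/2) * (δ / (B + ε/2 + 1)) :=
              mul_le_mul_of_nonneg_left hδ'le (by linarith)
            have h0 : (0:ℝ) < B + ε/2 + 1 := by linarith
            have h7 : (B + ε/2) * (δ / (B + ε/2 + 1)) < δ := by
              rw [show (B + ε/2) * (δ / (B + ε/2 + 1)) = (B + ε/2) * δ / (B + ε/2 + 1) by ring,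
                div_lt_iff₀ h0]
              nlinarith
            nlinarith
          have hηpos : 0 < (ε/2) * (s' - s) := mul_pos (half_pos hε) (sub_pos.2 hss')
          rw [abs_lt]
          constructor
          · linarith
          · linarith
        have := hδ' _ hq h1 h2
        have hfmclose : fm s (Hb s) - ε/2 ≤ fm u (h α u) := by
          have := (abs_lt.1 this).1
          simp only at this
          linarith
        exact_mod_cast hfmclose
      have hs'sup : h α s' ≤ Hb s' := hle_sup α s' hs'mem
      rw [le_div_iff₀ (by linarith)]
      nlinarith
    have hev : ∀ᶠ s' in 𝓝[>] s,
        ((fm s (Hb s) - ε : ℝ) : EReal) ≤ (((Hb s' - Hb s) / (s' - s) : ℝ) : EReal) := by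
      filter_upwards [Ioc_mem_nhdsGT_of_mem ⟨le_rfl, lt_add_of_pos_right s hδ'pos⟩] with s' hs'
      exact_mod_cast key s' hs'
    exact le_liminf_of_le (by isBoundedDefault) hev
  · -- upper Dini bound for the sup
    show DiniUpper Hb s ≤ ((fp s (Hb s) : ℝ) : EReal)
    apply ereal_le_coe_of_forall
    intro ε hε
    obtain ⟨δ, hδ, hδ'⟩ := hcontp s hsmem _ hfpc ε hε
    set δ' := min (b - s) (δ / (3 * B + 1)) with hδ'def
    have hδ'pos : 0 < δ' := lt_min (sub_pos.2 hs.2) (div_pos hδ (by linarith))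
    have hfpB : -B ≤ fp s (Hb s) := (abs_le.1 (hbd _ hpF).2).1
    have key : ∀ s' ∈ Ioc s (s + δ'), (Hb s' - Hb s) / (s' - s) ≤ fp s (Hb s) + ε := by
      intro s' hs'
      have hss' : s < s' := hs'.1
      have hd1 : s' - s ≤ δ' := by linarith [hs'.2]
      have hs'b : s' ≤ b := by
        have : δ' ≤ b - s := min_le_left _ _
        linarith
      have hs'mem : s' ∈ Icc a b := ⟨hsmem.1.trans hss'.le, hs'b⟩
      have hδ'le : δ' ≤ δ / (3 * B + 1) := min_le_right _ _
      have hδle : δ / (3 * B + 1) ≤ δ := by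
        apply div_le_self hδ.le; linarith
      have h3B : 3 * B * (s' - s) < δ := by
        have h5 : 3 * B * (s' - s) ≤ 3 * B * δ' := mul_le_mul_of_nonneg_left hd1 (by linarith)
        have h6 : 3 * B * δ' ≤ 3 * B * (δ / (3 * B + 1)) :=
          mul_le_mul_of_nonneg_left hδ'le (by linarith)
        have h0 : (0:ℝ) < 3 * B + 1 := by linarith
        have h7 : 3 * B * (δ / (3 * B + 1)) < δ := by
          rw [show 3 * B * (δ / (3 * B + 1)) = 3 * B * δ / (3 * B + 1) by ring, div_lt_iff₀ h0]
          nlinarith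
        linarith
      rw [div_le_iff₀ (by linarith)]
      have hsupb : Hb s' ≤ Hb s + (fp s (Hb s) + ε) * (s' - s) := by
        apply hsup_le
        intro α
        by_cases hcase : h α s ≤ Hb s - 2 * B * (s' - s)
        · have hl := (abs_le.1 (hlip α s hsmem s' hs'mem hss'.le)).2
          have hmul : (-B) * (s' - s) ≤ (fp s (Hb s) + ε) * (s' - s) :=
            mul_le_mul_of_nonneg_right (by linarith) (by linarith)
          nlinarith
        · push_neg at hcase
          have hcomp : h α s' ≤ h α s + (fp s (Hb s) + ε) * (s' - s) := by
            apply comp_upper hss'.le ((hcont α).mono (Icc_subset_Icc hsmem.1 hs'mem.2))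
            intro u hu
            have humem : u ∈ Ico a b := ⟨hsmem.1.trans hu.1, hu.2.trans_le hs'mem.2⟩
            have humem' : u ∈ Icc a b := ⟨humem.1, humem.2.le⟩
            refine (hdini α u humem).2.trans ?_
            have hq : (u, h α u) ∈ F := hFmem α u humem'
            have hus : u - s ≤ s' - s := by linarith [hu.2.le]
            have h1 : |u - s| < δ := by
              rw [abs_of_nonneg (sub_nonneg.2 hu.1)]
              calc u - s < s' - s := by linarith [hu.2]
                _ ≤ δ' := hd1
                _ ≤ δ := hδ'le.trans hδle
            have h2 : |h α u - Hb s| < δ := by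
              have hle1 : h α u ≤ Hb u := hle_sup α u humem'
              have hle2 := (abs_le.1 (hblip s hsmem u humem' hu.1)).2
              have hle3 := (abs_le.1 (hlip α s hsmem u humem' hu.1)).1
              have hBu2 : B * (u - s) ≤ B * (s' - s) :=
                mul_le_mul_of_nonneg_left hus hB.le
              have hBnn : 0 ≤ B * (s' - s) := mul_nonneg hB.le (by linarith)
              rw [abs_lt]
              constructor
              · linarith
              · linarith
            have := hδ' _ hq h1 h2
            have hfpclose : fp u (h α u) ≤ fp s (Hb s) + ε := by
              have := (abs_lt.1 this).2
              simp only at this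
              linarith
            exact_mod_cast hfpclose
          have := hle_sup α s hsmem
          linarith
      linarith
    have hev : ∀ᶠ s' in 𝓝[>] s,
        (((Hb s' - Hb s) / (s' - s) : ℝ) : EReal) ≤ ((fp s (Hb s) + ε : ℝ) : EReal) := by
      filter_upwards [Ioc_mem_nhdsGT_of_mem ⟨le_rfl, lt_add_of_pos_right s hδ'pos⟩] with s' hs'
      exact_mod_cast key s' hs'
    exact limsup_le_of_le (by isBoundedDefault) hev
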